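/- (Characterization of need-adjusted geometric rules) If a rule φ on the domain of linear hierarchy problems with needs satisfies needs lower bound, lowest rank consistency, highest rank independence, highest rank splitting neutrality, and bilateral linearity, then there exists λ ∈ [0,1] such that φ = φ^λ, the need-adjusted geometric rule with parameter λ. -/

import Mathlib

/-- The need-adjusted geometric rule with parameter `lam` on the hierarchy
`{0, ..., m-1}` (agent `m-1` is the top-ranked agent). -/
noncomputable def geomRule (lam : ℝ) (m : ℕ) (r z : ℕ → ℝ) (i : ℕ) : ℝ :=
  if i + 1 < m then
    z i + lam * ∑ j ∈ Finset.range (i + 1), (1 - lam) ^ (i - j) * (r j - z j)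
  else
    r i + ∑ j ∈ Finset.range (m - 1), (1 - lam) ^ (m - 1 - j) * (r j - z j)

/-- A valid linear hierarchy problem with needs: at least one agent,
nonnegative needs, and each agent's need is covered by his own revenue. -/
def Valid (m : ℕ) (r z : ℕ → ℝ) : Prop :=
  0 < m ∧ ∀ i < m, 0 ≤ z i ∧ z i ≤ r i
lemma geom_shift (c : ℝ) (E : ℕ → ℝ) (n : ℕ) :
    ∑ j ∈ Finset.range (n+1), c ^ (n+1-j) * E j
      = c * ∑ j ∈ Finset.range (n+1), c ^ (n-j) * E j := by
  rw [Finset.mul_sum]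
  refine Finset.sum_congr rfl fun j hj => ?_
  rw [Finset.mem_range] at hj
  have h : n + 1 - j = (n - j) + 1 := by omega
  rw [h, pow_succ]; ring

lemma key_sum (c : ℝ) (D Dh : ℕ → ℝ) (h0 : Dh 0 = D 1 + c * D 0)
    (hs : ∀ j, Dh (j+1) = D (j+2)) :
    ∀ i, ∑ j ∈ Finset.range (i+1), c ^ (i-j) * Dh j
      = ∑ j ∈ Finset.range (i+2), c ^ (i+1-j) * D j := by
  intro i
  induction i with
  | zero => simp [Finset.sum_range_succ, h0]; ring
  | succ i ih =>
    rw [Finset.sum_range_succ, Finset.sum_range_succ (f := fun j => c ^ (i+2-j) * D j),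
      geom_shift c Dh i, geom_shift c D (i+1), ih, hs]
    simp

lemma key_sum' (c : ℝ) (D Dh : ℕ → ℝ) (h0 : Dh 0 = D 1 + c * D 0)
    (hs : ∀ j, Dh (j+1) = D (j+2)) (i : ℕ) :
    ∑ j ∈ Finset.range (i+1), c ^ (i+1-j) * Dh j
      = ∑ j ∈ Finset.range (i+2), c ^ (i+2-j) * D j := by
  rw [geom_shift c Dh i, geom_shift c D (i+1), key_sum c D Dh h0 hs i]

theorem characterization_need_adjusted_geometric_rules
    (φ : ℕ → (ℕ → ℝ) → (ℕ → ℝ) → ℕ → ℝ)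
    -- φ is a rule: nonnegative allocations satisfying balance
    (hrule : ∀ m r z, Valid m r z →
      (∀ i < m, 0 ≤ φ m r z i) ∧
      ∑ i ∈ Finset.range m, φ m r z i = ∑ i ∈ Finset.range m, r i)
    -- needs lower bound
    (hnlb : ∀ m r z, Valid m r z → ∀ i < m, z i ≤ φ m r z i)
    -- lowest rank consistency
    (hlrc : ∀ m r z, Valid m r z → 2 ≤ m →
      Valid (m - 1)
        (fun j => if j = 0 then r 1 + r 0 - φ m r z 0 else r (j + 1))
        (fun j => z (j + 1)) →
      ∀ i, 1 ≤ i → i < m →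
        φ m r z i =
          φ (m - 1)
            (fun j => if j = 0 then r 1 + r 0 - φ m r z 0 else r (j + 1))
            (fun j => z (j + 1)) (i - 1))
    -- highest rank independence
    (hhri : ∀ m r z r' z', Valid m r z → Valid m r' z' →
      (∀ i, i + 1 < m → r i = r' i ∧ z i = z' i) →
      ∀ i, i + 1 < m → φ m r z i = φ m r' z' i)
    -- highest rank splitting neutrality
    (hhrsn : ∀ m r z r' z', Valid m r z → Valid (m + 1) r' z' →
      (∀ j, j + 1 < m → r' j = r j ∧ z' j = z j) →
      r' (m - 1) + r' m = r (m - 1) →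
      z' (m - 1) + z' m = z (m - 1) →
      ∀ i, i + 1 < m → φ (m + 1) r' z' i = φ m r z i)
    -- bilateral linearity
    (hbl : ∀ r z r' z' α β, 0 < α → 0 < β → Valid 2 r z → Valid 2 r' z' →
      ∀ i < 2,
        φ 2 (fun j => α * r j + β * r' j) (fun j => α * z j + β * z' j) i =
          α * φ 2 r z i + β * φ 2 r' z' i) :
    ∃ lam ∈ Set.Icc (0:ℝ) 1,
      ∀ m r z, Valid m r z → ∀ i < m, φ m r z i = geomRule lam m r z i := by
  classical
  set lam := φ 2 (fun _ => (1:ℝ)) (fun _ => (0:ℝ)) 0 with hlamdef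
  have vconst : ∀ a b : ℝ, 0 ≤ b → b ≤ a → Valid 2 (fun _ => a) (fun _ => b) :=
    fun a b hb hba => ⟨by norm_num, fun i _ => ⟨hb, hba⟩⟩
  have v10 := vconst 1 0 le_rfl zero_le_one
  have v11 := vconst 1 1 zero_le_one le_rfl
  have v21 := vconst 2 1 zero_le_one one_le_two
  have phi11 : φ 2 (fun _ => (1:ℝ)) (fun _ => (1:ℝ)) 0 = 1 := by
    have hb := (hrule 2 _ _ v11).2
    have h0 := hnlb 2 _ _ v11 0 (by norm_num)
    have h1 := hnlb 2 _ _ v11 1 (by norm_num)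
    simp [Finset.sum_range_succ] at hb
    linarith
  have hlam0 : 0 ≤ lam := (hrule 2 _ _ v10).1 0 (by norm_num)
  have hlam1 : lam ≤ 1 := by
    have ve : Valid 2 (fun j => if j = 0 then (1:ℝ) else 0) (fun _ => (0:ℝ)) :=
      ⟨by norm_num, fun i _ => ⟨le_rfl, by dsimp only; split <;> norm_num⟩⟩
    have he : lam = φ 2 (fun j => if j = 0 then (1:ℝ) else 0) (fun _ => (0:ℝ)) 0 :=
      hhri 2 _ _ _ _ v10 ve (fun i hi => by
        have hi0 : i = 0 := by omega
        subst hi0; simp) 0 (by norm_num)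
    have hb := (hrule 2 _ _ ve).2
    have h1 := (hrule 2 _ _ ve).1 1 (by norm_num)
    simp [Finset.sum_range_succ] at hb
    rw [he]; linarith
  have L2 : ∀ r z, Valid 2 r z → φ 2 r z 0 = z 0 + lam * (r 0 - z 0) := by
    intro r z hv
    obtain ⟨hz0, hzr⟩ := hv.2 0 (by norm_num)
    have vc := vconst (r 0) (z 0) hz0 hzr
    have step1 : φ 2 r z 0 = φ 2 (fun _ => r 0) (fun _ => z 0) 0 :=
      hhri 2 r z _ _ hv vc (fun i hi => by
        have hi0 : i = 0 := by omega
        subst hi0; exact ⟨rfl, rfl⟩) 0 (by norm_num)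
    have hA := hbl (fun _ => r 0) (fun _ => z 0) (fun _ => 2) (fun _ => 1) 1 1
      one_pos one_pos vc v21 0 (by norm_num)
    have hB := hbl (fun _ => 1) (fun _ => 1) (fun _ => 1) (fun _ => 0) (z 0 + 1) (r 0 - z 0 + 1)
      (by linarith) (by linarith) v11 v10 0 (by norm_num)
    have hC := hbl (fun _ => 1) (fun _ => 1) (fun _ => 1) (fun _ => 0) 1 1
      one_pos one_pos v11 v10 0 (by norm_num)
    have e1 : (fun _ : ℕ => 1 * r 0 + 1 * 2) = (fun _ : ℕ => r 0 + 2) := by funext _; ring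
    have e2 : (fun _ : ℕ => 1 * z 0 + 1 * 1) = (fun _ : ℕ => z 0 + 1) := by funext _; ring
    have e3 : (fun _ : ℕ => (z 0 + 1) * 1 + (r 0 - z 0 + 1) * 1) = (fun _ : ℕ => r 0 + 2) := by
      funext _; ring
    have e4 : (fun _ : ℕ => (z 0 + 1) * 1 + (r 0 - z 0 + 1) * 0) = (fun _ : ℕ => z 0 + 1) := by
      funext _; ring
    have e5 : (fun _ : ℕ => (1:ℝ) * 1 + 1 * 1) = (fun _ : ℕ => (2:ℝ)) := by funext _; ring
    have e6 : (fun _ : ℕ => (1:ℝ) * 1 + 1 * 0) = (fun _ : ℕ => (1:ℝ)) := by funext _; ring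
    rw [e1, e2] at hA
    rw [e3, e4] at hB
    rw [e5, e6] at hC
    rw [phi11] at hB hC
    rw [step1]
    linarith [hA, hB, hC]
  have L2full : ∀ r z, Valid 2 r z → ∀ i < 2, φ 2 r z i = geomRule lam 2 r z i := by
    intro r z hv i hi
    have h0 := L2 r z hv
    interval_cases i
    · rw [h0]; simp [geomRule]
    · have hb := (hrule 2 r z hv).2
      simp [Finset.sum_range_succ] at hb
      have h1 : φ 2 r z 1 = r 0 + r 1 - φ 2 r z 0 := by linarith
      rw [h1, h0]; simp [geomRule]; ring
  refine ⟨lam, Set.mem_Icc.2 ⟨hlam0, hlam1⟩, ?_⟩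
  intro m
  induction m with
  | zero => intro r z _ i hi; omega
  | succ m ih =>
    rcases m with _ | _ | k
    · intro r z hv i hi
      have hi0 : i = 0 := by omega
      subst hi0
      have hb := (hrule 1 r z hv).2
      simp [Finset.sum_range_one] at hb
      rw [hb]
      simp [geomRule]
    · exact L2full
    · intro r z hv i hi
      -- m + 1 = k + 3 agents
      simp only [show k+1+1 = k+2 from rfl, show k+2+1 = k+3 from rfl] at ih hv hi ⊢
      have hvM : Valid (k+2) (fun j => if j = k+1 then r (k+1) + r (k+2) else r j)
          (fun j => if j = k+1 then z (k+1) + z (k+2) else z j) := by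
        refine ⟨by omega, fun i hik => ?_⟩
        dsimp only
        by_cases h : i = k+1
        · subst h; rw [if_pos rfl, if_pos rfl]
          obtain ⟨h1, h2⟩ := hv.2 (k+1) (by omega)
          obtain ⟨h3, h4⟩ := hv.2 (k+2) (by omega)
          constructor <;> linarith
        · rw [if_neg h, if_neg h]
          exact hv.2 i (by omega)
      have hphi0 : φ (k+3) r z 0 = z 0 + lam * (r 0 - z 0) := by
        have h1 := hhrsn (k+2) _ _ r z hvM hv
          (fun j hj => ⟨(if_neg (by omega)).symm, (if_neg (by omega)).symm⟩)
          (by have h : k + 2 - 1 = k + 1 := by omega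
              rw [h]; simp)
          (by have h : k + 2 - 1 = k + 1 := by omega
              rw [h]; simp)
          0 (by omega)
        have h2 := ih _ _ hvM 0 (by omega)
        rw [h1, h2]
        simp only [geomRule]
        rw [if_pos (by omega : 0 + 1 < k + 2), Finset.sum_range_one]
        rw [if_neg (by omega : ¬ (0:ℕ) = k+1), if_neg (by omega : ¬ (0:ℕ) = k+1)]
        simp
      have hvR : Valid (k+2)
          (fun j => if j = 0 then r 1 + r 0 - φ (k+3) r z 0 else r (j+1))
          (fun j => z (j+1)) := by
        refine ⟨by omega, fun i hik => ?_⟩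
        dsimp only
        refine ⟨(hv.2 (i+1) (by omega)).1, ?_⟩
        by_cases h : i = 0
        · subst h
          rw [if_pos rfl, hphi0]
          obtain ⟨h1, h2⟩ := hv.2 0 (by omega)
          obtain ⟨h3, h4⟩ := hv.2 1 (by omega)
          nlinarith [mul_nonneg (by linarith : (0:ℝ) ≤ 1 - lam) (by linarith : (0:ℝ) ≤ r 0 - z 0)]
        · rw [if_neg h]
          exact (hv.2 (i+1) (by omega)).2
      rcases Nat.eq_zero_or_pos i with hi0 | hipos
      · subst hi0
        rw [hphi0]
        simp only [geomRule]
        rw [if_pos (by omega : 0 + 1 < k + 3), Finset.sum_range_one]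
        simp
      · obtain ⟨i', rfl⟩ : ∃ i', i = i' + 1 := ⟨i - 1, by omega⟩
        have hred : φ (k + 3) r z (i' + 1)
            = φ (k + 2) (fun j => if j = 0 then r 1 + r 0 - φ (k + 3) r z 0 else r (j + 1))
                (fun j => z (j + 1)) i' :=
          hlrc (k+3) r z hv (by omega) hvR (i'+1) (by omega) hi
        have hih := ih _ _ hvR i' (by omega)
        have hkey0 : (if (0:ℕ) = 0 then r 1 + r 0 - φ (k+3) r z 0 else r (0+1)) - z (0+1)
            = (r 1 - z 1) + (1 - lam) * (r 0 - z 0) := by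
          rw [if_pos rfl, hphi0]; ring
        have hkeys : ∀ j : ℕ,
            (if j + 1 = 0 then r 1 + r 0 - φ (k+3) r z 0 else r (j+1+1)) - z (j+1+1)
            = r (j+2) - z (j+2) := by
          intro j; rw [if_neg (Nat.succ_ne_zero j)]
        rw [hred, hih]
        rcases Nat.lt_or_ge i' (k+1) with hlt | hge
        · -- middle agents
          have hsum := key_sum (1-lam) (fun j => r j - z j)
            (fun j => (if j = 0 then r 1 + r 0 - φ (k+3) r z 0 else r (j+1)) - z (j+1))
            hkey0 hkeys i'
          simp only [geomRule]
          rw [if_pos (by omega : i' + 1 < k + 2), if_pos (by omega : i' + 1 + 1 < k + 3)]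
          rw [hsum]
        · -- top agent: i' = k + 1
          have hie : i' = k + 1 := by omega
          subst hie
          have hsum := key_sum' (1-lam) (fun j => r j - z j)
            (fun j => (if j = 0 then r 1 + r 0 - φ (k+3) r z 0 else r (j+1)) - z (j+1))
            hkey0 hkeys k
          simp only [geomRule]
          rw [if_neg (by omega : ¬ (k + 1 + 1 < k + 2)), if_neg (by omega : ¬ (k + 1 + 1 + 1 < k + 3))]
          simp only [show k + 2 - 1 = k + 1 from by omega, show k + 3 - 1 = k + 2 from by omega]
          rw [if_neg (Nat.succ_ne_zero k), hsum]
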